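/- Asymptotic angle bound for shortest paths to a compact set, upper curvature bound (Lemma 4.3, curvature ≤ 0 case). Let X be a proper metric space in which every pair of points is joined by a unit-speed shortest path and in which every point has a neighborhood that is a region of curvature ≤ 0. Let K ⊆ X be compact and nonempty, let γ : [0,T] → X be a unit-speed geodesic with γ(0) ∉ K, and write ℓ(t) := Metric.infDist (γ(t)) K. Let tₙ ∈ (0,T] with tₙ → 0, and for each n let σₙ : [0,1] → X be a constant-speed shortest path from γ(tₙ) to K, meaning dist(σₙ(u), σₙ(v)) = ℓ(tₙ)·|u − v| for all u, v ∈ [0,1], σₙ(0) = γ(tₙ), and σₙ(1) ∈ K; similarly let σ₀ : [0,1] → X be a constant-speed shortest path from γ(0) to K with speed ℓ(0). Suppose σₙ → σ₀ uniformly on [0,1]. Let σ̂₀ : [0, ℓ(0)] → X, σ̂₀(r) = σ₀(r/ℓ(0)), be the unit-speed reparameterization of σ₀. Then there exists s' > 0 such that for every s ∈ (0, s'], limsup_{n→∞} ∠⁰_{γ(tₙ)}(γ(0), σₙ(s/ℓ(tₙ))) ≤ π − ∠⁺(γ, σ̂₀) (the comparison angles being defined for all sufficiently large n, since ℓ(tₙ)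 → ℓ(0) > 0). -/

import Mathlib

open Filter Topology Metric Set

noncomputable section

/-- `γ` is a unit-speed geodesic (shortest path) on the interval `[0, T]`:
the distance between any two of its points equals the parameter difference. -/
def IsUnitSpeedGeodesicOn {X : Type*} [MetricSpace X] (γ : ℝ → X) (T : ℝ) : Prop :=
  ∀ t ∈ Set.Icc (0:ℝ) T, ∀ t' ∈ Set.Icc (0:ℝ) T, dist (γ t) (γ t') = |t - t'|

/-- The Euclidean comparison angle `∠⁰_p(x, y)` at the vertex `p`. -/
def compAngle {X : Type*} [MetricSpace X] (p x y : X) : ℝ :=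
  Real.arccos ((dist p x ^ 2 + dist p y ^ 2 - dist x y ^ 2) /
    (2 * dist p x * dist p y))

/-- The upper angle `∠⁺(γ, η)` between two geodesics with `γ 0 = η 0`:
the limsup of comparison angles `∠⁰_{γ 0}(γ t, η s)` as `(t, s) → (0⁺, 0⁺)`. -/
def upperAngle {X : Type*} [MetricSpace X] (γ η : ℝ → X) : ℝ :=
  Filter.limsup (fun ts : ℝ × ℝ => compAngle (γ 0) (γ ts.1) (η ts.2))
    ((𝓝[>] (0:ℝ)) ×ˢ (𝓝[>] (0:ℝ)))

/-- The lower angle `∠⁻(γ, η)`: liminf of comparison angles. -/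
def lowerAngle {X : Type*} [MetricSpace X] (γ η : ℝ → X) : ℝ :=
  Filter.liminf (fun ts : ℝ × ℝ => compAngle (γ 0) (γ ts.1) (η ts.2))
    ((𝓝[>] (0:ℝ)) ×ˢ (𝓝[>] (0:ℝ)))

/-- `U` is a region of curvature bounded by `0` in the comparison sense, where
`rel` is `≤` (curvature `≤ 0`) or `≥` (curvature `≥ 0`): any two points of `U`
are joined by a unit-speed shortest path with image in `U`, and for every
geodesic triangle contained in `U` and every Euclidean comparison triangle,
distances between pairs of points on the sides are related by `rel` to the
distances between the corresponding comparison points. -/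
def IsCurvRegion {X : Type*} [MetricSpace X] (rel : ℝ → ℝ → Prop) (U : Set X) : Prop :=
  (∀ x ∈ U, ∀ y ∈ U, ∃ γ : ℝ → X, IsUnitSpeedGeodesicOn γ (dist x y) ∧
    γ 0 = x ∧ γ (dist x y) = y ∧ ∀ t ∈ Set.Icc (0:ℝ) (dist x y), γ t ∈ U) ∧
  (∀ x ∈ U, ∀ y ∈ U, ∀ z ∈ U, ∀ p : Fin 3 → ℝ → X,
    (∀ i, IsUnitSpeedGeodesicOn (p i) (![dist x y, dist x z, dist y z] i) ∧
      p i 0 = (![(x, y), (x, z), (y, z)] i).1 ∧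
      p i (![dist x y, dist x z, dist y z] i) = (![(x, y), (x, z), (y, z)] i).2 ∧
      ∀ t ∈ Set.Icc (0:ℝ) (![dist x y, dist x z, dist y z] i), p i t ∈ U) →
    ∀ xb yb zb : EuclideanSpace ℝ (Fin 2),
      dist xb yb = dist x y → dist xb zb = dist x z → dist yb zb = dist y z →
      ∀ i j : Fin 3, ∀ a b : ℝ,
        a ∈ Set.Icc (0:ℝ) (![dist x y, dist x z, dist y z] i) →
        b ∈ Set.Icc (0:ℝ) (![dist x y, dist x z, dist y z] j) →
        rel (dist (p i a) (p j b))
          (dist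
            (![fun c : ℝ => AffineMap.lineMap xb yb (c / dist x y),
               fun c : ℝ => AffineMap.lineMap xb zb (c / dist x z),
               fun c : ℝ => AffineMap.lineMap yb zb (c / dist y z)] i a)
            (![fun c : ℝ => AffineMap.lineMap xb yb (c / dist x y),
               fun c : ℝ => AffineMap.lineMap xb zb (c / dist x z),
               fun c : ℝ => AffineMap.lineMap yb zb (c / dist y z)] j b)))

/-- A region of curvature `≤ 0`. -/
def IsCurvLeRegion {X : Type*} [MetricSpace X] (U : Set X) : Prop :=
  IsCurvRegion (· ≤ ·) U

/-- A region of curvature `≥ 0`. -/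
def IsCurvGeRegion {X : Type*} [MetricSpace X] (U : Set X) : Prop :=
  IsCurvRegion (· ≥ ·) U

end

namespace AsympAux


lemma arccos_antitone : Antitone Real.arccos := by
  intro x y h
  simp only [Real.arccos_eq_pi_div_two_sub_arcsin]
  have := Real.monotone_arcsin h
  linarith

lemma cos_expr_mem {a b c : ℝ} (ha : 0 < a) (hb : 0 < b)
    (h1 : |a - b| ≤ c) (h2 : c ≤ a + b) :
    -1 ≤ (a^2 + b^2 - c^2) / (2*a*b) ∧ (a^2 + b^2 - c^2) / (2*a*b) ≤ 1 := by
  have hc : 0 ≤ c := le_trans (abs_nonneg _) h1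
  have habs := abs_le.mp h1
  constructor
  · rw [le_div_iff₀ (by positivity)]
    nlinarith
  · rw [div_le_one (by positivity)]
    nlinarith [habs.1, habs.2]

lemma euclid_cmp (d1 d2 d3 : ℝ) (h1 : 0 < d1) (h2 : 0 < d2)
    (h31 : |d1 - d2| ≤ d3) (h32 : d3 ≤ d1 + d2) :
    ∃ A B C : EuclideanSpace ℝ (Fin 2),
      dist A B = d1 ∧ dist A C = d2 ∧ dist B C = d3 ∧
      ∀ a b : ℝ, dist (AffineMap.lineMap A B (a / d1)) (AffineMap.lineMap A C (b / d2)) ^ 2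
        = a^2 + b^2 - 2*a*b*((d1^2+d2^2-d3^2)/(2*d1*d2)) := by
  have hd3 : 0 ≤ d3 := le_trans (abs_nonneg _) h31
  obtain ⟨hcm1, hc1⟩ := cos_expr_mem h1 h2 h31 h32
  set c : ℝ := (d1^2+d2^2-d3^2)/(2*d1*d2) with hc
  set s : ℝ := Real.sqrt (1 - c^2) with hs
  have hs0 : 0 ≤ s := Real.sqrt_nonneg _
  have hs2 : s^2 = 1 - c^2 := Real.sq_sqrt (by nlinarith)
  set v : EuclideanSpace ℝ (Fin 2) := EuclideanSpace.single 0 1 with hv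
  set w : EuclideanSpace ℝ (Fin 2) := EuclideanSpace.single 1 1 with hw
  have hvv : inner ℝ v v = (1:ℝ) := by
    simp [hv, EuclideanSpace.inner_single_left, EuclideanSpace.single_apply]
  have hww : inner ℝ w w = (1:ℝ) := by
    simp [hw, EuclideanSpace.inner_single_left, EuclideanSpace.single_apply]
  have hvw : inner ℝ v w = (0:ℝ) := by
    simp [hv, hw, EuclideanSpace.inner_single_left, EuclideanSpace.single_apply]
  have hwv : inner ℝ w v = (0:ℝ) := by
    simp [hv, hw, EuclideanSpace.inner_single_left, EuclideanSpace.single_apply]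
  have key : ∀ p q : ℝ, ‖p • v + q • w‖^2 = p^2 + q^2 := by
    intro p q
    rw [← real_inner_self_eq_norm_sq]
    rw [inner_add_add_self]
    simp only [real_inner_smul_left, real_inner_smul_right, hvv, hww, hvw, hwv]
    ring
  have normvec : ∀ p q : ℝ, ‖p • v + q • w‖ = Real.sqrt (p^2 + q^2) := by
    intro p q
    rw [← key p q, Real.sqrt_sq (norm_nonneg _)]
  refine ⟨0, d1 • v, (d2*c) • v + (d2*s) • w, ?_, ?_, ?_, ?_⟩
  · rw [dist_eq_norm]
    have : (0:EuclideanSpace ℝ (Fin 2)) - d1 • v = (-d1) • v + (0:ℝ) • w := by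
      simp
    rw [this, normvec]
    rw [show (-d1)^2 + (0:ℝ)^2 = d1^2 by ring, Real.sqrt_sq h1.le]
  · rw [dist_eq_norm]
    have : (0:EuclideanSpace ℝ (Fin 2)) - ((d2*c) • v + (d2*s) • w)
        = (-(d2*c)) • v + (-(d2*s)) • w := by
      simp; abel
    rw [this, normvec]
    rw [show (-(d2*c))^2 + (-(d2*s))^2 = d2^2 by linear_combination d2^2 * hs2, Real.sqrt_sq h2.le]
  · rw [dist_eq_norm]
    have : d1 • v - ((d2*c) • v + (d2*s) • w) = (d1 - d2*c) • v + (-(d2*s)) • w := by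
      rw [sub_smul, neg_smul]; abel
    rw [this, normvec]
    have hcc : 2*d1*d2*c = d1^2+d2^2-d3^2 := by
      rw [hc]; field_simp
    rw [show (d1 - d2*c)^2 + (-(d2*s))^2 = d3^2 by linear_combination d2^2 * hs2 - hcc,
      Real.sqrt_sq hd3]
  · intro a b
    have lm1 : AffineMap.lineMap (0:EuclideanSpace ℝ (Fin 2)) (d1 • v) (a / d1) = a • v := by
      rw [AffineMap.lineMap_apply_module]
      rw [smul_smul]
      rw [div_mul_cancel₀ _ h1.ne']
      simp
    have lm2 : AffineMap.lineMap (0:EuclideanSpace ℝ (Fin 2)) ((d2*c) • v + (d2*s) • w) (b / d2)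
        = (b*c) • v + (b*s) • w := by
      rw [AffineMap.lineMap_apply_module]
      rw [smul_add, smul_smul, smul_smul]
      rw [show b / d2 * (d2*c) = b*c by field_simp,
          show b / d2 * (d2*s) = b*s by field_simp]
      simp
    rw [lm1, lm2, dist_eq_norm]
    have : a • v - ((b*c) • v + (b*s) • w) = (a - b*c) • v + (-(b*s)) • w := by
      rw [sub_smul, neg_smul]; abel
    rw [this, key]
    linear_combination b^2 * hs2



/-- Thin-triangle comparison at the vertex `x`: the distance between points on
the two sides through `x` is bounded by the Euclidean law of cosines with the
vertex comparison angle. -/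
lemma thin' {X : Type*} [MetricSpace X] {U : Set X} (hU : IsCurvLeRegion U) {x y z : X}
    (hx : x ∈ U) (hy : y ∈ U) (hz : z ∈ U)
    {f g : ℝ → X} {d1 d2 : ℝ}
    (hd1 : dist x y = d1) (hd2 : dist x z = d2)
    (h1 : 0 < d1) (h2 : 0 < d2)
    (hf : ∀ u ∈ Icc (0:ℝ) d1, ∀ v ∈ Icc (0:ℝ) d1, dist (f u) (f v) = |u - v|)
    (hf0 : f 0 = x) (hfe : f d1 = y)
    (hfU : ∀ u ∈ Icc (0:ℝ) d1, f u ∈ U)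
    (hg : ∀ u ∈ Icc (0:ℝ) d2, ∀ v ∈ Icc (0:ℝ) d2, dist (g u) (g v) = |u - v|)
    (hg0 : g 0 = x) (hge : g d2 = z)
    (hgU : ∀ u ∈ Icc (0:ℝ) d2, g u ∈ U)
    {a b : ℝ} (ha : a ∈ Icc (0:ℝ) d1) (hb : b ∈ Icc (0:ℝ) d2) :
    dist (f a) (g b) ^ 2 ≤ a^2 + b^2 -
      2*a*b*((d1^2 + d2^2 - dist y z^2)/(2*d1*d2)) := by
  subst hd1
  subst hd2
  obtain ⟨h, hh, hh0, hhe, hhU⟩ := hU.1 y hy z hz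
  have htri1 : |dist x y - dist x z| ≤ dist y z := by
    have h' := abs_dist_sub_le y z x
    rwa [dist_comm y x, dist_comm z x] at h'
  have htri2 : dist y z ≤ dist x y + dist x z := by
    rw [dist_comm x y]
    exact dist_triangle y x z
  obtain ⟨A, B, C, hAB, hAC, hBC, hformula⟩ :=
    euclid_cmp (dist x y) (dist x z) (dist y z) h1 h2 htri1 htri2
  have hcomp := hU.2 x hx y hy z hz ![f, g, h] ?_ A B C hAB hAC hBC 0 1 a b ?_ ?_
  · simp only [Matrix.cons_val_zero, Matrix.cons_val_one, Matrix.head_cons] at hcomp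
    have hsq := pow_le_pow_left₀ dist_nonneg hcomp 2
    calc dist (f a) (g b) ^ 2 ≤ _ := hsq
      _ = _ := hformula a b
  · intro i
    fin_cases i
    · refine ⟨?_, ?_, ?_, ?_⟩ <;>
        simp only [Matrix.cons_val_zero, Fin.isValue] <;>
        first
          | exact hf
          | exact hf0
          | exact hfe
          | exact hfU
    · refine ⟨?_, ?_, ?_, ?_⟩ <;>
        simp only [Matrix.cons_val_one, Matrix.head_cons, Fin.isValue] <;>
        first
          | exact hg
          | exact hg0
          | exact hge
          | exact hgU
    · refine ⟨?_, ?_, ?_, ?_⟩ <;>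
        simp only [Matrix.cons_val_two, Matrix.tail_cons, Matrix.head_cons, Fin.isValue] <;>
        first
          | exact hh
          | exact hh0
          | exact hhe
          | exact hhU
  · simpa using ha
  · simpa using hb

lemma le_of_sq_le_sq {a b : ℝ} (h : a^2 ≤ b^2) (ha : 0 ≤ a) (hb : 0 ≤ b) : a ≤ b := by
  nlinarith

set_option maxHeartbeats 1000000 in
/-- The gluing estimate. -/
lemma glue_cos {X : Type*} [MetricSpace X] {x z : X} {χ : ℝ → X}
    {tq c r s1 e : ℝ}
    (htq : 0 < tq) (hc : 0 < c) (hr : 0 < r) (htr : tq ≤ r) (hrc : r ≤ c)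
    (hY1 : -1 ≤ (tq^2+c^2-s1^2)/(2*tq*c)) (hY2 : (tq^2+c^2-s1^2)/(2*tq*c) ≤ 1)
    (hZ1 : -1 ≤ (c^2+r^2-e^2)/(2*c*r)) (hZ2 : (c^2+r^2-e^2)/(2*c*r) ≤ 1)
    (hA : ∀ m, 0 ≤ m → m ≤ c →
      dist x (χ m) ^2 ≤ tq^2 + m^2 - 2*tq*m*((tq^2+c^2-s1^2)/(2*tq*c)))
    (hB : ∀ m, 0 ≤ m → m ≤ c →
      dist (χ m) z ^2 ≤ m^2 + r^2 - 2*m*r*((c^2+r^2-e^2)/(2*c*r))) :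
    Real.arccos ((tq^2 + r^2 - dist x z^2)/(2*tq*r)) ≤
      Real.arccos ((tq^2+c^2-s1^2)/(2*tq*c)) + Real.arccos ((c^2+r^2-e^2)/(2*c*r)) := by
  set Y := (tq^2+c^2-s1^2)/(2*tq*c) with hYdef
  set Z := (c^2+r^2-e^2)/(2*c*r) with hZdef
  clear_value Y Z
  clear hYdef hZdef
  set φ := Real.arccos Y with hφdef
  set ψ := Real.arccos Z with hψdef
  by_cases hS : Real.pi ≤ φ + ψ
  · exact le_trans (Real.arccos_le_pi _) hS
  push_neg at hS
  have hφ0 : 0 ≤ φ := Real.arccos_nonneg _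
  have hψ0 : 0 ≤ ψ := Real.arccos_nonneg _
  have hφπ : φ ≤ Real.pi := Real.arccos_le_pi _
  have hψπ : ψ ≤ Real.pi := Real.arccos_le_pi _
  have hcosφ : Real.cos φ = Y := Real.cos_arccos hY1 hY2
  have hcosψ : Real.cos ψ = Z := Real.cos_arccos hZ1 hZ2
  set sφ := Real.sin φ with hsφdef
  set sψ := Real.sin ψ with hsψdef
  have hsinφ0 : 0 ≤ sφ := Real.sin_nonneg_of_nonneg_of_le_pi hφ0 hφπ
  have hsinψ0 : 0 ≤ sψ := Real.sin_nonneg_of_nonneg_of_le_pi hψ0 hψπ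
  have hP1 : sφ^2 = 1 - Y^2 := by
    have := Real.sin_sq_add_cos_sq φ
    rw [hcosφ] at this; linarith
  have hP2 : sψ^2 = 1 - Z^2 := by
    have := Real.sin_sq_add_cos_sq ψ
    rw [hcosψ] at this; linarith
  have hcosS : Real.cos (φ + ψ) = Y * Z - sφ * sψ := by
    rw [Real.cos_add, hcosφ, hcosψ]
  have hsinS : Real.sin (φ + ψ) = sφ * Z + Y * sψ := by
    rw [Real.sin_add, hcosφ, hcosψ]
  have hsinS0 : 0 ≤ Real.sin (φ+ψ) :=
    Real.sin_nonneg_of_nonneg_of_le_pi (by positivity) hS.le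
  set cS := Real.cos (φ + ψ) with hcSdef
  have hcS1 : cS ≤ 1 := Real.cos_le_one _
  have hcSm1 : -1 ≤ cS := Real.neg_one_le_cos _
  -- main distance estimate
  have key : dist x z ^ 2 ≤ tq^2 + r^2 - 2*tq*r*cS := by
    set D := tq * sφ + r * sψ with hDdef
    rcases eq_or_lt_of_le (show (0:ℝ) ≤ D by positivity) with hD0 | hD0
    · -- degenerate: both sines vanish
      have hts : tq * sφ = 0 ∧ r * sψ = 0 :=
        (add_eq_zero_iff_of_nonneg (by positivity) (by positivity)).mp hD0.symm
      have hsφ : sφ = 0 := by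
        rcases mul_eq_zero.mp hts.1 with h | h
        · exact absurd h htq.ne'
        · exact h
      have hsψ : sψ = 0 := by
        rcases mul_eq_zero.mp hts.2 with h | h
        · exact absurd h hr.ne'
        · exact h
      have hY2' : (Y - 1) * (Y + 1) = 0 := by
        have h0 : (0:ℝ) = 1 - Y^2 := by rw [← hP1, hsφ]; ring
        linear_combination h0
      have hZ2' : (Z - 1) * (Z + 1) = 0 := by
        have h0 : (0:ℝ) = 1 - Z^2 := by rw [← hP2, hsψ]; ring
        linear_combination h0
      have hYone : Y = 1 := by
        rcases mul_eq_zero.mp hY2' with h | h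
        · linarith
        · exfalso
          have hy : Y = -1 := by linarith
          have : φ = Real.pi := by rw [hφdef, hy, Real.arccos_neg_one]
          linarith
      have hZone : Z = 1 := by
        rcases mul_eq_zero.mp hZ2' with h | h
        · linarith
        · exfalso
          have hz' : Z = -1 := by linarith
          have : ψ = Real.pi := by rw [hψdef, hz', Real.arccos_neg_one]
          linarith
      have h1 := hA tq htq.le (le_trans htr hrc)
      have h2 := hB tq htq.le (le_trans htr hrc)
      rw [hYone] at h1
      rw [hZone] at h2
      have hx0 : dist x (χ tq) = 0 := by
        have h1' : dist x (χ tq) ^ 2 ≤ 0 := by linarith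
        have h1'' : dist x (χ tq) ^ 2 = 0 :=
          le_antisymm h1' (sq_nonneg _)
        exact pow_eq_zero_iff (two_ne_zero) |>.mp h1''
      have h2' : dist (χ tq) z ≤ r - tq := by
        refine le_of_sq_le_sq ?_ dist_nonneg (by linarith)
        calc dist (χ tq) z ^2 ≤ tq^2 + r^2 - 2*tq*r*1 := h2
          _ = (r - tq)^2 := by ring
      have hd : dist x z ≤ r - tq := by
        calc dist x z ≤ dist x (χ tq) + dist (χ tq) z := dist_triangle _ _ _
          _ ≤ r - tq := by rw [hx0]; linarith
      have hcos1 : cS = 1 := by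
        rw [hcosS, hYone, hZone, hsφ, hsψ]; ring
      rw [hcos1]
      calc dist x z ^2 ≤ (r - tq)^2 := pow_le_pow_left₀ dist_nonneg hd 2
        _ = tq^2 + r^2 - 2*tq*r*1 := by ring
    · -- nondegenerate case
      have hsS : Real.sin (φ + ψ) = sφ * Z + Y * sψ := hsinS
      set u := tq * r * Real.sin (φ + ψ) / D with hudef
      have hu0 : 0 ≤ u := by positivity
      have huD : u * D = tq * r * Real.sin (φ + ψ) := by
        rw [hudef]; field_simp
      have hur : u ≤ r := by
        rw [hudef, div_le_iff₀ hD0, hsS, hDdef]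
        have e1 : tq * r * (sφ * Z) ≤ r * (tq * sφ) := by
          have h' : sφ * Z ≤ sφ * 1 := by
            apply mul_le_mul_of_nonneg_left hZ2 hsinφ0
          calc tq * r * (sφ * Z) ≤ tq * r * (sφ * 1) := by
                apply mul_le_mul_of_nonneg_left h' (by positivity)
            _ = r * (tq * sφ) := by ring
        have e2 : tq * r * (Y * sψ) ≤ r * (r * sψ) := by
          have h' : tq * Y ≤ r * 1 := by
            calc tq * Y ≤ tq * 1 := by
                  apply mul_le_mul_of_nonneg_left hY2 htq.le
              _ ≤ r * 1 := by linarith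
          calc tq * r * (Y * sψ) = (tq * Y) * (r * sψ) := by ring
            _ ≤ (r * 1) * (r * sψ) := by
                apply mul_le_mul_of_nonneg_right h' (by positivity)
            _ = r * (r * sψ) := by ring
        calc tq * r * (sφ * Z + Y * sψ)
            = tq * r * (sφ * Z) + tq * r * (Y * sψ) := by ring
          _ ≤ r * (tq * sφ) + r * (r * sψ) := add_le_add e1 e2
          _ = r * (tq * sφ + r * sψ) := by ring
      have huc : u ≤ c := le_trans hur hrc
      have h1 := hA u hu0 huc
      have h2 := hB u hu0 huc
      clear_value u
      set E3 := tq^2 + r^2 - 2*tq*r*cS with hE3def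
      have hE30 : 0 ≤ E3 := by
        rw [hE3def]
        nlinarith [mul_pos htq hr]
      have hE1id : (tq^2 + u^2 - 2*tq*u*Y) * D^2 = (tq*sφ)^2 * E3 := by
        have expand : (tq^2 + u^2 - 2*tq*u*Y) * D^2
            = tq^2*D^2 + (u*D)^2 - 2*tq*Y*(u*D)*D := by ring
        rw [expand, huD, hsS, hE3def, hcosS, hDdef]
        linear_combination (tq^2 * (-(2*tq*r*sφ*sψ) - r^2*sψ^2)) * hP1 +
          (tq^2 * r^2*sφ^2) * hP2
      have hE2id : (u^2 + r^2 - 2*u*r*Z) * D^2 = (r*sψ)^2 * E3 := by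
        have expand : (u^2 + r^2 - 2*u*r*Z) * D^2
            = r^2*D^2 + (u*D)^2 - 2*r*Z*(u*D)*D := by ring
        rw [expand, huD, hsS, hE3def, hcosS, hDdef]
        linear_combination (r^2 * (tq^2*sψ^2)) * hP1 +
          (r^2 * (-(2*tq*r*sφ*sψ) - tq^2*sφ^2)) * hP2
      have hD2 : (0:ℝ) < D^2 := by positivity
      have hE1eq : tq^2 + u^2 - 2*tq*u*Y = (tq*sφ/D)^2 * E3 := by
        rw [div_pow, div_mul_eq_mul_div, eq_div_iff hD2.ne']
        linear_combination hE1id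
      have hE2eq : u^2 + r^2 - 2*u*r*Z = (r*sψ/D)^2 * E3 := by
        rw [div_pow, div_mul_eq_mul_div, eq_div_iff hD2.ne']
        linear_combination hE2id
      have hxd : dist x (χ u) ≤ (tq*sφ/D) * Real.sqrt E3 := by
        refine le_of_sq_le_sq ?_ dist_nonneg (by positivity)
        rw [mul_pow, Real.sq_sqrt hE30]
        calc dist x (χ u) ^2 ≤ tq^2 + u^2 - 2*tq*u*Y := h1
          _ = (tq*sφ/D)^2 * E3 := hE1eq
      have hzd : dist (χ u) z ≤ (r*sψ/D) * Real.sqrt E3 := by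
        refine le_of_sq_le_sq ?_ dist_nonneg (by positivity)
        rw [mul_pow, Real.sq_sqrt hE30]
        calc dist (χ u) z ^2 ≤ u^2 + r^2 - 2*u*r*Z := h2
          _ = (r*sψ/D)^2 * E3 := hE2eq
      have hsum : dist x z ≤ Real.sqrt E3 := by
        calc dist x z ≤ dist x (χ u) + dist (χ u) z := dist_triangle _ _ _
          _ ≤ (tq*sφ/D) * Real.sqrt E3 + (r*sψ/D) * Real.sqrt E3 :=
              add_le_add hxd hzd
          _ = ((tq*sφ + r*sψ)/D) * Real.sqrt E3 := by ring
          _ = Real.sqrt E3 := by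
              rw [← hDdef, div_self hD0.ne']; ring
      calc dist x z ^2 ≤ Real.sqrt E3 ^ 2 := by
            apply pow_le_pow_left₀ dist_nonneg hsum
        _ = E3 := Real.sq_sqrt hE30
  -- convert to the angle inequality
  have hScos : cS ≤ (tq^2 + r^2 - dist x z^2)/(2*tq*r) := by
    rw [le_div_iff₀ (by positivity)]
    linarith
  calc Real.arccos ((tq^2 + r^2 - dist x z^2)/(2*tq*r))
      ≤ Real.arccos cS := arccos_antitone hScos
    _ = φ + ψ := by rw [hcSdef]; exact Real.arccos_cos (by positivity) hS.le


end AsympAux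

open AsympAux in
/-- Lemma 4.3, curvature `≤ 0` case: asymptotic angle bound for shortest
paths to a compact set. -/
theorem asymptotic_angle_bound_of_curvLe {X : Type*} [MetricSpace X]
    [ProperSpace X]
    (hgeo : ∀ x y : X, ∃ γ : ℝ → X, IsUnitSpeedGeodesicOn γ (dist x y) ∧
      γ 0 = x ∧ γ (dist x y) = y)
    (hcurv : ∀ p : X, ∃ U ∈ 𝓝 p, IsCurvLeRegion U)
    {K : Set X} (hK : IsCompact K) (hKne : K.Nonempty)
    {T : ℝ} (hT : 0 < T)
    (γ : ℝ → X) (hγ : IsUnitSpeedGeodesicOn γ T) (hγ0 : γ 0 ∉ K)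
    (tn : ℕ → ℝ) (htn : ∀ n, tn n ∈ Set.Ioc (0:ℝ) T)
    (htn0 : Filter.Tendsto tn atTop (𝓝 0))
    (σn : ℕ → ℝ → X)
    (hσn : ∀ n, (∀ u ∈ Set.Icc (0:ℝ) 1, ∀ v ∈ Set.Icc (0:ℝ) 1,
        dist (σn n u) (σn n v) = Metric.infDist (γ (tn n)) K * |u - v|) ∧
      σn n 0 = γ (tn n) ∧ σn n 1 ∈ K)
    (σ0 : ℝ → X)
    (hσ0 : (∀ u ∈ Set.Icc (0:ℝ) 1, ∀ v ∈ Set.Icc (0:ℝ) 1,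
        dist (σ0 u) (σ0 v) = Metric.infDist (γ 0) K * |u - v|) ∧
      σ0 0 = γ 0 ∧ σ0 1 ∈ K)
    (hconv : TendstoUniformlyOn (fun n u => σn n u) σ0 atTop (Set.Icc 0 1)) :
    ∃ s' > (0:ℝ), ∀ s ∈ Set.Ioc (0:ℝ) s',
      Filter.limsup (fun n => compAngle (γ (tn n)) (γ 0)
          (σn n (s / Metric.infDist (γ (tn n)) K))) atTop
        ≤ Real.pi - upperAngle γ (fun r => σ0 (r / Metric.infDist (γ 0) K)) := by
  obtain ⟨U, hUn, hUc⟩ := hcurv (γ 0)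
  obtain ⟨ρ, hρ, hball⟩ : ∃ ρ > 0, Metric.closedBall (γ 0) ρ ⊆ U := by
    rcases Metric.mem_nhds_iff.mp hUn with ⟨ε, hε, hsub⟩
    refine ⟨ε/2, by positivity, fun x hx => hsub ?_⟩
    rw [Metric.mem_closedBall] at hx
    rw [Metric.mem_ball]
    linarith
  set ℓ0 := Metric.infDist (γ 0) K with hℓ0def
  have hℓ0 : 0 < ℓ0 := by
    rw [hℓ0def]
    exact (hK.isClosed.notMem_iff_infDist_pos hKne).mp hγ0
  -- the unit-speed reparametrization of σ0
  set σ : ℝ → X := fun r => σ0 (r / ℓ0) with hσdef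
  have hσmem : ∀ r : ℝ, 0 ≤ r → r ≤ ℓ0 → r / ℓ0 ∈ Icc (0:ℝ) 1 := by
    intro r h1 h2
    exact ⟨by positivity, by rw [div_le_one hℓ0]; exact h2⟩
  have hσdist : ∀ r r' : ℝ, 0 ≤ r → r ≤ ℓ0 → 0 ≤ r' → r' ≤ ℓ0 →
      dist (σ r) (σ r') = |r - r'| := by
    intro r r' h1 h2 h3 h4
    show dist (σ0 (r / ℓ0)) (σ0 (r' / ℓ0)) = |r - r'|
    rw [hσ0.1 _ (hσmem r h1 h2) _ (hσmem r' h3 h4), div_sub_div_same, abs_div,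
      abs_of_pos hℓ0]
    field_simp
  have hσ0q : σ 0 = γ 0 := by
    show σ0 (0 / ℓ0) = γ 0
    rw [zero_div]
    exact hσ0.2.1
  have hσq : ∀ r : ℝ, 0 ≤ r → r ≤ ℓ0 → dist (γ 0) (σ r) = r := by
    intro r h1 h2
    rw [← hσ0q, hσdist 0 r le_rfl hℓ0.le h1 h2, abs_sub_comm, sub_zero, abs_of_nonneg h1]
  -- the master scale
  set ρ' := min ρ (min T ℓ0) with hρ'def
  have hρ'0 : 0 < ρ' := lt_min hρ (lt_min hT hℓ0)
  have hρ'ρ : ρ' ≤ ρ := min_le_left _ _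
  have hρ'T : ρ' ≤ T := le_trans (min_le_right _ _) (min_le_left _ _)
  have hρ'ℓ : ρ' ≤ ℓ0 := le_trans (min_le_right _ _) (min_le_right _ _)
  have hγdist : ∀ t : ℝ, 0 ≤ t → t ≤ T → dist (γ 0) (γ t) = t := by
    intro t h1 h2
    rw [hγ 0 ⟨le_rfl, hT.le⟩ t ⟨h1, h2⟩, abs_sub_comm, sub_zero, abs_of_nonneg h1]
  have hγsub : ∀ d : ℝ, d ≤ T → ∀ u ∈ Icc (0:ℝ) d, ∀ v ∈ Icc (0:ℝ) d,
      dist (γ u) (γ v) = |u - v| := by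
    intro d hd u hu v hv
    exact hγ u ⟨hu.1, le_trans hu.2 hd⟩ v ⟨hv.1, le_trans hv.2 hd⟩
  have hσsub : ∀ d : ℝ, d ≤ ℓ0 → ∀ u ∈ Icc (0:ℝ) d, ∀ v ∈ Icc (0:ℝ) d,
      dist (σ u) (σ v) = |u - v| := by
    intro d hd u hu v hv
    exact hσdist u v hu.1 (le_trans hu.2 hd) hv.1 (le_trans hv.2 hd)
  have hmemU : ∀ x : X, dist (γ 0) x ≤ ρ → x ∈ U := by
    intro x hx
    apply hball
    rwa [Metric.mem_closedBall, dist_comm]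
  have hqU : γ 0 ∈ U := hmemU _ (by rw [dist_self]; exact hρ.le)
  -- the key fact: the upper angle is at most every comparison angle at positive scales
  set α := upperAngle γ σ with hαdef
  have keyfact : ∀ t r : ℝ, 0 < t → t ≤ ρ' → 0 < r → r ≤ ρ' →
      α ≤ Real.arccos ((t^2 + r^2 - dist (γ t) (σ r)^2)/(2*t*r)) := by
    intro t r ht htm hr hrm
    rw [hαdef, upperAngle]
    apply Filter.limsup_le_of_le (Filter.isCoboundedUnder_le_of_le _
      (fun ts => Real.arccos_nonneg _))
    have hmem : Ioc (0:ℝ) t ×ˢ Ioc (0:ℝ) r ∈ (𝓝[>] (0:ℝ)) ×ˢ (𝓝[>] (0:ℝ)) :=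
      Filter.prod_mem_prod (Ioc_mem_nhdsGT ht) (Ioc_mem_nhdsGT hr)
    filter_upwards [hmem] with ts hts
    obtain ⟨⟨ht1, ht2⟩, hr1, hr2⟩ := hts
    have e1 : dist (γ 0) (γ ts.1) = ts.1 :=
      hγdist _ ht1.le (le_trans ht2 (le_trans htm hρ'T))
    have e2 : dist (γ 0) (σ ts.2) = ts.2 :=
      hσq _ hr1.le (le_trans hr2 (le_trans hrm hρ'ℓ))
    have e3 : dist (γ 0) (γ t) = t := hγdist t ht.le (le_trans htm hρ'T)
    have e4 : dist (γ 0) (σ r) = r := hσq r hr.le (le_trans hrm hρ'ℓ)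
    rw [e1, e2]
    apply arccos_antitone
    have hthin : dist (γ ts.1) (σ ts.2) ^ 2 ≤ ts.1^2 + ts.2^2 -
        2*ts.1*ts.2*((t^2 + r^2 - dist (γ t) (σ r)^2)/(2*t*r)) := by
      have h := thin' hUc (x := γ 0) (y := γ t) (z := σ r)
        hqU
        (hmemU _ (by rw [e3]; exact le_trans htm hρ'ρ))
        (hmemU _ (by rw [e4]; exact le_trans hrm hρ'ρ))
        (f := γ) (g := σ) e3 e4 ht hr
        (hγsub t (le_trans htm hρ'T)) rfl rfl
        (fun u hu => hmemU _ (by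
          rw [hγdist u hu.1 (le_trans hu.2 (le_trans htm hρ'T))]
          exact le_trans hu.2 (le_trans htm hρ'ρ)))
        (hσsub r (le_trans hrm hρ'ℓ)) hσ0q rfl
        (fun u hu => hmemU _ (by
          rw [hσq u hu.1 (le_trans hu.2 (le_trans hrm hρ'ℓ))]
          exact le_trans hu.2 (le_trans hrm hρ'ρ)))
        (a := ts.1) (b := ts.2) ⟨ht1.le, ht2⟩ ⟨hr1.le, hr2⟩
      exact h
    rw [le_div_iff₀ (by positivity)]
    nlinarith [hthin]
  -- choose the scale s'
  refine ⟨ρ'/4, by positivity, ?_⟩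
  intro s hs
  obtain ⟨hs0, hsρ⟩ := hs
  have hsℓ0 : s ≤ ℓ0 := le_trans hsρ (by linarith)
  -- Lipschitz property of infDist along γ
  have hℓlip : ∀ n, |Metric.infDist (γ (tn n)) K - ℓ0| ≤ tn n := by
    intro n
    have hd1 : dist (γ (tn n)) (γ 0) = tn n := by
      rw [dist_comm]
      exact hγdist _ (htn n).1.le (htn n).2
    have hd2 : dist (γ 0) (γ (tn n)) = tn n := hγdist _ (htn n).1.le (htn n).2
    rw [abs_sub_le_iff, hℓ0def]
    constructor
    · have h := Metric.infDist_le_infDist_add_dist (x := γ (tn n)) (y := γ 0) (s := K)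
      rw [hd1] at h
      linarith
    · have h := Metric.infDist_le_infDist_add_dist (x := γ 0) (y := γ (tn n)) (s := K)
      rw [hd2] at h
      linarith
  have htn_ev : ∀ δ : ℝ, 0 < δ → ∀ᶠ n in atTop, tn n < δ := by
    intro δ hδ
    exact htn0.eventually (gt_mem_nhds hδ)
  have hℓtend : Tendsto (fun n => Metric.infDist (γ (tn n)) K) atTop (𝓝 ℓ0) := by
    rw [Metric.tendsto_nhds]
    intro ε hε
    filter_upwards [htn_ev ε hε] with n hn
    rw [Real.dist_eq]
    exact lt_of_le_of_lt (hℓlip n) hn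
  set δs := min (s/2) (min (ρ'/8) (ℓ0/4)) with hδsdef
  have hδs0 : 0 < δs := lt_min (by linarith) (lt_min (by linarith) (by linarith))
  -- the endpoints of the comparison configuration
  obtain ⟨w, hwdef⟩ : ∃ w : ℕ → X,
      w = fun n => σn n (s / Metric.infDist (γ (tn n)) K) := ⟨_, rfl⟩
  have hwn : ∀ n, w n = σn n (s / Metric.infDist (γ (tn n)) K) := fun n => by rw [hwdef]
  have hparrange : ∀ᶠ n in atTop, s / Metric.infDist (γ (tn n)) K ∈ Icc (0:ℝ) 1 ∧
      0 < Metric.infDist (γ (tn n)) K ∧ s ≤ Metric.infDist (γ (tn n)) K := by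
    filter_upwards [htn_ev (ℓ0/4) (by linarith)] with n hn
    have h1 := abs_le.mp (hℓlip n)
    have hpos : 0 < Metric.infDist (γ (tn n)) K := by linarith [h1.1]
    have hsle : s ≤ Metric.infDist (γ (tn n)) K := by
      have : s ≤ ℓ0/4 := le_trans hsρ (by linarith)
      linarith [h1.1]
    exact ⟨⟨by positivity, by rw [div_le_one hpos]; exact hsle⟩, hpos, hsle⟩
  -- the points w n converge to σ s
  have hwlim : Tendsto w atTop (𝓝 (σ s)) := by
    rw [Metric.tendsto_nhds]
    intro ε hε
    have huconv := Metric.tendstoUniformlyOn_iff.mp hconv (ε/2) (by positivity)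
    have hpar : Tendsto (fun n => s / Metric.infDist (γ (tn n)) K) atTop (𝓝 (s/ℓ0)) :=
      tendsto_const_nhds.div hℓtend hℓ0.ne'
    have hpar2 : ∀ᶠ n in atTop,
        |s / Metric.infDist (γ (tn n)) K - s/ℓ0| < ε/(2*ℓ0) := by
      have hmem : {x : ℝ | |x - s/ℓ0| < ε/(2*ℓ0)} ∈ 𝓝 (s/ℓ0) := by
        have hb : Metric.ball (s/ℓ0) (ε/(2*ℓ0)) ∈ 𝓝 (s/ℓ0) :=
          Metric.ball_mem_nhds _ (by positivity)
        simpa [Metric.ball, Real.dist_eq] using hb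
      exact hpar.eventually hmem
    filter_upwards [huconv, hpar2, hparrange] with n h1 h2 h3
    obtain ⟨hmem01, hpos, hsle⟩ := h3
    have hmem01' : s/ℓ0 ∈ Icc (0:ℝ) 1 := hσmem s hs0.le hsℓ0
    have step1 : dist (σn n (s / Metric.infDist (γ (tn n)) K))
        (σ0 (s / Metric.infDist (γ (tn n)) K)) < ε/2 := by
      rw [dist_comm]
      exact h1 _ hmem01
    have step2 : dist (σ0 (s / Metric.infDist (γ (tn n)) K)) (σ s) < ε/2 := by
      show dist (σ0 _) (σ0 (s/ℓ0)) < ε/2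
      rw [hσ0.1 _ hmem01 _ hmem01']
      calc ℓ0 * |s / Metric.infDist (γ (tn n)) K - s/ℓ0| < ℓ0 * (ε/(2*ℓ0)) :=
            mul_lt_mul_of_pos_left h2 hℓ0
        _ = ε/2 := by field_simp
    calc dist (w n) (σ s)
        ≤ dist (σn n (s / Metric.infDist (γ (tn n)) K))
            (σ0 (s / Metric.infDist (γ (tn n)) K))
          + dist (σ0 (s / Metric.infDist (γ (tn n)) K)) (σ s) := by
          rw [hwn n]; exact dist_triangle _ _ _
      _ < ε/2 + ε/2 := add_lt_add step1 step2
      _ = ε := by ring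
  -- limits of the relevant distances
  have hcflim : Tendsto (fun n => dist (γ 0) (w n)) atTop (𝓝 s) := by
    have h := (tendsto_const_nhds : Tendsto (fun _ : ℕ => γ 0) atTop (𝓝 (γ 0))).dist hwlim
    rwa [hσq s hs0.le hsℓ0] at h
  have heflim : Tendsto (fun n => dist (w n) (σ (s/2))) atTop (𝓝 (s/2)) := by
    have h := hwlim.dist (tendsto_const_nhds : Tendsto (fun _ : ℕ => σ (s/2)) atTop (𝓝 (σ (s/2))))
    have e : dist (σ s) (σ (s/2)) = s/2 := by
      rw [hσdist s (s/2) hs0.le hsℓ0 (by positivity) (by linarith),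
        abs_of_nonneg (by linarith)]
      ring
    rwa [e] at h
  have hZtend : Tendsto (fun n =>
      Real.arccos (((dist (γ 0) (w n))^2 + (s/2)^2 - (dist (w n) (σ (s/2)))^2)
        / (2 * dist (γ 0) (w n) * (s/2)))) atTop (𝓝 0) := by
    have hnum : Tendsto (fun n => (dist (γ 0) (w n))^2 + (s/2)^2
        - (dist (w n) (σ (s/2)))^2) atTop (𝓝 (s^2)) := by
      have h := ((hcflim.pow 2).add (tendsto_const_nhds : Tendsto (fun _ : ℕ => (s/2)^2) atTop (𝓝 ((s/2)^2)))).sub (heflim.pow 2)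
      have e : s^2 + (s/2)^2 - (s/2)^2 = s^2 := by ring
      rwa [e] at h
    have hden : Tendsto (fun n => 2 * dist (γ 0) (w n) * (s/2)) atTop (𝓝 (2*s*(s/2))) :=
      (((tendsto_const_nhds : Tendsto (fun _ : ℕ => (2:ℝ)) atTop (𝓝 2))).mul hcflim).mul ((tendsto_const_nhds : Tendsto (fun _ : ℕ => (s/2 : ℝ)) atTop (𝓝 (s/2))))
    have hq := hnum.div hden (by positivity)
    have e2 : s^2/(2*s*(s/2)) = 1 := by
      field_simp
    rw [e2] at hq
    have harc := (Real.continuous_arccos.tendsto 1).comp hq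
    rwa [Real.arccos_one] at harc
  -- rewrite the goal in terms of w
  rw [show (fun n => compAngle (γ (tn n)) (γ 0) (σn n (s / Metric.infDist (γ (tn n)) K)))
      = (fun n => compAngle (γ (tn n)) (γ 0) (w n)) by funext n; rw [hwn n]]
  apply le_of_forall_pos_le_add
  intro ε hε
  apply Filter.limsup_le_of_le (Filter.isCoboundedUnder_le_of_le _
    (fun n => Real.arccos_nonneg _))
  filter_upwards [htn_ev δs hδs0, hparrange, hZtend.eventually (gt_mem_nhds hε)]
    with n hδn hpar hZn
  obtain ⟨hmem01, hℓpos, hsle⟩ := hpar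
  have ht0 : 0 < tn n := (htn n).1
  have htT : tn n ≤ T := (htn n).2
  have hts2 : tn n ≤ s/2 := le_trans hδn.le (min_le_left _ _)
  have htρ8 : tn n ≤ ρ'/8 := le_trans hδn.le (le_trans (min_le_right _ _) (min_le_left _ _))
  have hp : dist (γ 0) (γ (tn n)) = tn n := hγdist _ ht0.le htT
  have hpw : dist (γ (tn n)) (w n) = s := by
    have hval := (hσn n).1 0 ⟨le_rfl, zero_le_one⟩ _ hmem01
    rw [(hσn n).2.1] at hval
    rw [hwn n, hval, abs_sub_comm, sub_zero, abs_of_nonneg (by positivity)]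
    field_simp
  have hcn_ub : dist (γ 0) (w n) ≤ s + tn n := by
    calc dist (γ 0) (w n) ≤ dist (γ 0) (γ (tn n)) + dist (γ (tn n)) (w n) :=
          dist_triangle _ _ _
      _ = s + tn n := by rw [hp, hpw]; ring
  have hcn_lb : s - tn n ≤ dist (γ 0) (w n) := by
    have h := dist_triangle (γ (tn n)) (γ 0) (w n)
    rw [dist_comm (γ (tn n)) (γ 0), hp, hpw] at h
    linarith
  have hcnpos : 0 < dist (γ 0) (w n) := by linarith
  have hs2cn : s/2 ≤ dist (γ 0) (w n) := by linarith
  -- memberships in the curvature region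
  have hpU : γ (tn n) ∈ U := hmemU _ (by rw [hp]; linarith)
  have hwU : w n ∈ U := hmemU _ (by linarith)
  have hσs2 : dist (γ 0) (σ (s/2)) = s/2 := hσq (s/2) (by positivity) (by linarith)
  have hzU : σ (s/2) ∈ U := hmemU _ (by rw [hσs2]; linarith)
  -- the geodesic from γ 0 to w n inside U
  obtain ⟨χ, hχg, hχ0, hχe, hχU⟩ := hUc.1 (γ 0) hqU (w n) hwU
  -- the two thinness bounds
  have hA : ∀ m, 0 ≤ m → m ≤ dist (γ 0) (w n) → dist (γ (tn n)) (χ m)^2 ≤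
      (tn n)^2 + m^2 - 2*(tn n)*m*
        (((tn n)^2 + (dist (γ 0) (w n))^2 - s^2)/(2*(tn n)*(dist (γ 0) (w n)))) := by
    intro m hm0 hmc
    have h := thin' hUc (x := γ 0) (y := γ (tn n)) (z := w n)
      hqU hpU hwU (f := γ) (g := χ) hp rfl ht0 hcnpos
      (hγsub (tn n) htT) rfl rfl
      (fun u hu => hmemU _ (by
        rw [hγdist u hu.1 (le_trans hu.2 htT)]
        linarith [hu.2]))
      hχg hχ0 hχe hχU
      (a := tn n) (b := m) ⟨ht0.le, le_rfl⟩ ⟨hm0, hmc⟩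
    rw [hpw] at h
    exact h
  have hB : ∀ m, 0 ≤ m → m ≤ dist (γ 0) (w n) → dist (χ m) (σ (s/2))^2 ≤
      m^2 + (s/2)^2 - 2*m*(s/2)*
        (((dist (γ 0) (w n))^2 + (s/2)^2 - (dist (w n) (σ (s/2)))^2)
          /(2*(dist (γ 0) (w n))*(s/2))) := by
    intro m hm0 hmc
    exact thin' hUc (x := γ 0) (y := w n) (z := σ (s/2))
      hqU hwU hzU (f := χ) (g := σ) rfl hσs2 hcnpos (by positivity)
      hχg hχ0 hχe hχU
      (hσsub (s/2) (by linarith)) hσ0q rfl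
      (fun u hu => hmemU _ (by
        rw [hσq u hu.1 (by linarith [hu.2])]
        linarith [hu.2]))
      (a := m) (b := s/2) ⟨hm0, hmc⟩ ⟨by positivity, le_rfl⟩
  -- triangle inequalities for the cosine bounds
  have htri1 : |tn n - dist (γ 0) (w n)| ≤ s := by
    have h := abs_dist_sub_le (γ (tn n)) (w n) (γ 0)
    rw [dist_comm (γ (tn n)) (γ 0), hp, dist_comm (w n) (γ 0), hpw] at h
    exact h
  have htri2 : s ≤ tn n + dist (γ 0) (w n) := by linarith
  have htri3 : |dist (γ 0) (w n) - s/2| ≤ dist (w n) (σ (s/2)) := by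
    have h := abs_dist_sub_le (w n) (σ (s/2)) (γ 0)
    rw [dist_comm (w n) (γ 0), dist_comm (σ (s/2)) (γ 0), hσs2] at h
    exact h
  have htri4 : dist (w n) (σ (s/2)) ≤ dist (γ 0) (w n) + s/2 := by
    have h := dist_triangle (w n) (γ 0) (σ (s/2))
    rw [dist_comm (w n) (γ 0), hσs2] at h
    linarith
  obtain ⟨hY1, hY2⟩ := cos_expr_mem ht0 hcnpos htri1 htri2
  obtain ⟨hZ1, hZ2⟩ := cos_expr_mem hcnpos (show (0:ℝ) < s/2 by positivity) htri3 htri4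
  -- the gluing estimate and the key fact
  have hglue := glue_cos (x := γ (tn n)) (z := σ (s/2)) (χ := χ)
    ht0 hcnpos (show (0:ℝ) < s/2 by positivity) hts2 hs2cn
    hY1 hY2 hZ1 hZ2 hA hB
  have hkey := keyfact (tn n) (s/2) ht0 (by linarith) (by positivity) (by linarith)
  have hαYZ : α ≤
      Real.arccos (((tn n)^2 + (dist (γ 0) (w n))^2 - s^2)/(2*(tn n)*(dist (γ 0) (w n))))
      + Real.arccos (((dist (γ 0) (w n))^2 + (s/2)^2 - (dist (w n) (σ (s/2)))^2)
          /(2*(dist (γ 0) (w n))*(s/2))) :=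
    le_trans hkey hglue
  -- the comparison angle at γ (tn n)
  rw [dist_comm (γ (tn n)) (γ 0), hp, hpw]
  have hXY : -(((tn n)^2 + (dist (γ 0) (w n))^2 - s^2)/(2*(tn n)*(dist (γ 0) (w n))))
      ≤ ((tn n)^2 + s^2 - (dist (γ 0) (w n))^2)/(2*(tn n)*s) := by
    have hfac : ((tn n)^2 + s^2 - (dist (γ 0) (w n))^2)/(2*(tn n)*s)
        + ((tn n)^2 + (dist (γ 0) (w n))^2 - s^2)/(2*(tn n)*(dist (γ 0) (w n)))
        = ((dist (γ 0) (w n) + s) * ((tn n + s) - dist (γ 0) (w n))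
            * ((tn n + dist (γ 0) (w n)) - s))
          / (2*(tn n)*s*(dist (γ 0) (w n))) := by
      field_simp
      ring
    have hnum : 0 ≤ (dist (γ 0) (w n) + s) * ((tn n + s) - dist (γ 0) (w n))
        * ((tn n + dist (γ 0) (w n)) - s) := by
      apply mul_nonneg (mul_nonneg (by positivity) (by linarith)) (by linarith)
    have hdiv := div_nonneg hnum (show (0:ℝ) ≤ 2*(tn n)*s*(dist (γ 0) (w n)) by positivity)
    rw [← hfac] at hdiv
    linarith
  calc Real.arccos (((tn n)^2 + s^2 - (dist (γ 0) (w n))^2)/(2*(tn n)*s))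
      ≤ Real.arccos (-(((tn n)^2 + (dist (γ 0) (w n))^2 - s^2)
          /(2*(tn n)*(dist (γ 0) (w n))))) := arccos_antitone hXY
    _ = Real.pi - Real.arccos (((tn n)^2 + (dist (γ 0) (w n))^2 - s^2)
          /(2*(tn n)*(dist (γ 0) (w n)))) := Real.arccos_neg _
    _ ≤ Real.pi - α + ε := by linarith
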